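/- In the Fomin–Kirillov algebra FK(3), the elements ab + ba, ab + bc − ac, and abac are central, and any two of the first two multiply to zero: (ab+ba)² = (ab+bc−ac)² = (ab+ba)(ab+bc−ac) = 0. -/

import Mathlib

/-!
The elements `ab + ba`, `ab + bc − ac`, `abac` of `FK(3)` are central and satisfy
`(ab+ba)² = (ab+bc−ac)² = (ab+ba)(ab+bc−ac) = 0`.
-/

open FreeAlgebra

/-- The defining relations of the Fomin–Kirillov algebra `FK(3)`. -/
inductive FKRel (k : Type) [Field k] : FreeAlgebra k (Fin 3) → FreeAlgebra k (Fin 3) → Prop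
  | sq_a : FKRel k (ι k (0 : Fin 3) * ι k (0 : Fin 3)) 0
  | sq_b : FKRel k (ι k (1 : Fin 3) * ι k (1 : Fin 3)) 0
  | sq_c : FKRel k (ι k (2 : Fin 3) * ι k (2 : Fin 3)) 0
  | rel1 : FKRel k (ι k (0 : Fin 3) * ι k (1 : Fin 3) + ι k (1 : Fin 3) * ι k (2 : Fin 3) +
      ι k (2 : Fin 3) * ι k (0 : Fin 3)) 0
  | rel2 : FKRel k (ι k (1 : Fin 3) * ι k (0 : Fin 3) + ι k (0 : Fin 3) * ι k (2 : Fin 3) +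
      ι k (2 : Fin 3) * ι k (1 : Fin 3)) 0

/-- The Fomin–Kirillov algebra on three generators. -/
abbrev FK3 (k : Type) [Field k] := RingQuot (FKRel k)

variable (k : Type) [Field k]

/-- The generator `a` of `FK(3)`. -/
noncomputable def FKa : FK3 k := RingQuot.mkAlgHom k (FKRel k) (ι k (0 : Fin 3))
/-- The generator `b` of `FK(3)`. -/
noncomputable def FKb : FK3 k := RingQuot.mkAlgHom k (FKRel k) (ι k (1 : Fin 3))
/-- The generator `c` of `FK(3)`. -/
noncomputable def FKc : FK3 k := RingQuot.mkAlgHom k (FKRel k) (ι k (2 : Fin 3))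

namespace FK3Aux
variable {k}

local notation "a" => FKa k
local notation "b" => FKb k
local notation "c" => FKc k

/- Instance-matched copies of basic `neg`/`sub`/`pow` lemmas (the `RingQuot` instances are
defeq to, but not syntactically identical with, the ones in the generic lemmas). -/
lemma NM (x y : FK3 k) : -x * y = -(x * y) := neg_mul x y
lemma MN (x y : FK3 k) : x * -y = -(x * y) := mul_neg x y
lemma NN (x : FK3 k) : - -x = x := neg_neg x
lemma NA (x y : FK3 k) : -(x + y) = -x + -y := neg_add x y
lemma SE (x y : FK3 k) : x - y = x + -y := sub_eq_add_neg x y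
lemma P2 (x : FK3 k) : x ^ 2 = x * x := sq x

lemma haa : a * a = 0 := by
  simpa [FKa, map_mul] using RingQuot.mkAlgHom_rel k (FKRel.sq_a (k := k))
lemma hbb : b * b = 0 := by
  simpa [FKb, map_mul] using RingQuot.mkAlgHom_rel k (FKRel.sq_b (k := k))
lemma hcc : c * c = 0 := by
  simpa [FKc, map_mul] using RingQuot.mkAlgHom_rel k (FKRel.sq_c (k := k))
lemma hrel1 : a * b + b * c + c * a = 0 := by
  simpa [FKa, FKb, FKc, map_mul, map_add] using RingQuot.mkAlgHom_rel k (FKRel.rel1 (k := k))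
lemma hrel2 : b * a + a * c + c * b = 0 := by
  simpa [FKa, FKb, FKc, map_mul, map_add] using RingQuot.mkAlgHom_rel k (FKRel.rel2 (k := k))

lemma rca : c * a = -(a * b) + -(b * c) := by
  have h := hrel1 (k := k)
  linear_combination (norm := abel) h
lemma rcb : c * b = -(b * a) + -(a * c) := by
  have h := hrel2 (k := k)
  linear_combination (norm := abel) h

lemma ha' (x : FK3 k) : a * (a * x) = 0 := by rw [← mul_assoc, haa, zero_mul]
lemma hb' (x : FK3 k) : b * (b * x) = 0 := by rw [← mul_assoc, hbb, zero_mul]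
lemma hc' (x : FK3 k) : c * (c * x) = 0 := by rw [← mul_assoc, hcc, zero_mul]
lemma rca' (x : FK3 k) : c * (a * x) = -(a * (b * x)) + -(b * (c * x)) := by
  rw [← mul_assoc, rca]
  simp only [add_mul, NM, mul_assoc]
lemma rcb' (x : FK3 k) : c * (b * x) = -(b * (a * x)) + -(a * (c * x)) := by
  rw [← mul_assoc, rcb]
  simp only [add_mul, NM, mul_assoc]

lemma d1 : b * (a * b) = a * (b * a) := by
  have e : c * (a * a) = 0 := by rw [haa, mul_zero]
  rw [← mul_assoc, rca] at e
  simp only [add_mul, NM, mul_assoc, rca, mul_add, MN, NN, hb', add_zero, neg_zero,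
    zero_add, mul_zero] at e
  linear_combination (norm := abel) e

lemma d1' (x : FK3 k) : b * (a * (b * x)) = a * (b * (a * x)) := by
  rw [show b * (a * (b * x)) = b * (a * b) * x by simp only [mul_assoc], d1]
  simp only [mul_assoc]

lemma mem_center_of (x : FK3 k) (hA : a * x = x * a) (hB : b * x = x * b)
    (hC : c * x = x * c) : x ∈ Subalgebra.center k (FK3 k) := by
  rw [Subalgebra.mem_center_iff]
  intro y
  obtain ⟨z, rfl⟩ := RingQuot.mkAlgHom_surjective k (FKRel k) y
  refine FreeAlgebra.induction k (Fin 3)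
    (motive := fun z => RingQuot.mkAlgHom k (FKRel k) z * x = x * RingQuot.mkAlgHom k (FKRel k) z)
    ?_ ?_ ?_ ?_ z
  · intro r
    rw [AlgHom.commutes]
    exact Algebra.commutes r x
  · intro i
    match i with
    | 0 => exact hA
    | 1 => exact hB
    | 2 => exact hC
  · intro p q hp hq
    rw [map_mul, mul_assoc, hq, ← mul_assoc, hp, mul_assoc]
  · intro p q hp hq
    rw [map_add, add_mul, hp, hq, mul_add]

end FK3Aux

/-- In `FK(3)`, the elements `ab + ba`, `ab + bc − ac` and `abac` are central,
and moreover `(ab+ba)² = (ab+bc−ac)² = (ab+ba)(ab+bc−ac) = 0`. -/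
theorem FK3_central_elements (h2 : ringChar k ≠ 2) (h3 : ringChar k ≠ 3) :
    (FKa k * FKb k + FKb k * FKa k ∈ Subalgebra.center k (FK3 k)) ∧
    (FKa k * FKb k + FKb k * FKc k - FKa k * FKc k ∈ Subalgebra.center k (FK3 k)) ∧
    (FKa k * FKb k * FKa k * FKc k ∈ Subalgebra.center k (FK3 k)) ∧
    (FKa k * FKb k + FKb k * FKa k) ^ 2 = 0 ∧
    (FKa k * FKb k + FKb k * FKc k - FKa k * FKc k) ^ 2 = 0 ∧
    (FKa k * FKb k + FKb k * FKa k) * (FKa k * FKb k + FKb k * FKc k - FKa k * FKc k) = 0 := by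
  open FK3Aux in
  refine ⟨mem_center_of _ ?_ ?_ ?_, mem_center_of _ ?_ ?_ ?_, mem_center_of _ ?_ ?_ ?_,
    ?_, ?_, ?_⟩ <;>
  · simp only [P2, SE, mul_assoc, mul_add, add_mul, NM, MN, NN, NA, mul_zero, zero_mul,
      add_zero, zero_add, neg_zero, haa, hbb, hcc, ha', hb', hc', rca, rcb, rca', rcb',
      d1, d1']
    try abel
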